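/- Let f,g ∈ C^∞((−1,1)) and suppose u, ũ ∈ C^∞([0,∞)×(−1,1)) both satisfy [∂_s² + 2y ∂_s∂_y + ∂_s − (1−y²)∂_y² + 2y ∂_y] u(s,y) = 0 on (0,∞)×(−1,1) together with the initial conditions u(0,y) = f(y) and ∂_s u(s,y)|_{s=0} = g(y) for all y ∈ (−1,1). Then u = ũ on [0,∞)×(−1,1). -/

import Mathlib

open MeasureTheory Set ENNReal

/-- Partial derivative in the first (time-like) variable. -/
noncomputable def dS (u : ℝ → ℝ → ℂ) (s y : ℝ) : ℂ := deriv (fun s' => u s' y) s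

/-- Partial derivative in the second (space-like) variable. -/
noncomputable def dY (u : ℝ → ℝ → ℂ) (s y : ℝ) : ℂ := deriv (fun y' => u s y') y

/-- The hyperboloidal wave operator
`∂_s² + 2y ∂_s∂_y + ∂_s − (1−y²)∂_y² + 2y ∂_y`. -/
noncomputable def waveOp (u : ℝ → ℝ → ℂ) (s y : ℝ) : ℂ :=
  dS (dS u) s y + 2 * (y:ℂ) * dS (dY u) s y + dS u s y
    - (1 - (y:ℂ)^2) * dY (dY u) s y + 2 * (y:ℂ) * dY u s y

open Filter Topology

namespace Stmt3Aux

lemma slice1 {W : ℝ × ℝ → ℂ} {L : ℝ × ℝ →L[ℝ] ℂ} {s y : ℝ}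
    (h : HasFDerivAt W L (s, y)) : HasDerivAt (fun s' => W (s', y)) (L (1, 0)) s := by
  have h1 : HasDerivAt (fun s' : ℝ => ((s' : ℝ), y)) ((1:ℝ), (0:ℝ)) s :=
    (hasDerivAt_id s).prodMk (hasDerivAt_const s y)
  exact h.comp_hasDerivAt s h1

lemma slice2 {W : ℝ × ℝ → ℂ} {L : ℝ × ℝ →L[ℝ] ℂ} {s y : ℝ}
    (h : HasFDerivAt W L (s, y)) : HasDerivAt (fun y' => W (s, y')) (L (0, 1)) y := by
  have h1 : HasDerivAt (fun y' : ℝ => ((s : ℝ), y')) ((0:ℝ), (1:ℝ)) y :=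
    (hasDerivAt_const y s).prodMk (hasDerivAt_id y)
  exact h.comp_hasDerivAt y h1

/-- constancy from continuity on `[0,b]` and zero derivative on `(0,b)` -/
lemma const_of_deriv_zero {f : ℝ → ℂ} {b : ℝ} (hb : 0 < b)
    (hc : ContinuousOn f (Icc 0 b)) (hd : ∀ t ∈ Ioo 0 b, HasDerivAt f 0 t) :
    f b = f 0 := by
  have key : ∀ ε ∈ Ioo (0:ℝ) b, f b = f ε := by
    intro ε hε
    have := constant_of_has_deriv_right_zero (f := f) (a := ε) (b := b)
      (hc.mono (Icc_subset_Icc hε.1.le le_rfl))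
      (fun x hx => (hd x ⟨lt_of_lt_of_le hε.1 hx.1, hx.2⟩).hasDerivWithinAt)
    exact this b (right_mem_Icc.2 hε.2.le)
  have h0 : (0:ℝ) ∈ closure (Ioo 0 b) := by
    rw [closure_Ioo hb.ne]; exact ⟨le_rfl, hb.le⟩
  have hne : (𝓝[Ioo (0:ℝ) b] 0).NeBot := mem_closure_iff_nhdsWithin_neBot.1 h0
  have h1 : Tendsto f (𝓝[Ioo (0:ℝ) b] 0) (𝓝 (f 0)) :=
    (hc.continuousWithinAt (left_mem_Icc.2 hb.le)).mono_left
      (nhdsWithin_mono _ Ioo_subset_Icc_self)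
  have h2 : Tendsto f (𝓝[Ioo (0:ℝ) b] 0) (𝓝 (f b)) := by
    refine Tendsto.congr' ?_ (tendsto_const_nhds (x := f b) (f := 𝓝[Ioo (0:ℝ) b] 0))
    exact eventually_nhdsWithin_of_forall (fun x hx => (key x hx))
  exact tendsto_nhds_unique h2 h1


/-- Differentiability of `q ↦ fderiv W q (1, q.2 - 1)` at points of an open set on which
`W` is smooth, together with the value of its derivative applied to `(1, y+1)`. -/
lemma top1 : ((⊤:ℕ∞) : WithTop ℕ∞) + 1 ≤ ((⊤:ℕ∞) : WithTop ℕ∞) := by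
  exact_mod_cast le_top

lemma top2 : (1 : WithTop ℕ∞) ≤ ((⊤:ℕ∞) : WithTop ℕ∞) := by exact_mod_cast le_top

lemma top3 : (2 : WithTop ℕ∞) ≤ ((⊤:ℕ∞) : WithTop ℕ∞) := by
  have : ((2:ℕ∞) : WithTop ℕ∞) ≤ ((⊤:ℕ∞) : WithTop ℕ∞) := by exact_mod_cast le_top
  simpa using this

lemma Fdiff {uu : ℝ × ℝ → ℂ} {O : Set (ℝ × ℝ)} (hO : IsOpen O)
    (h : ContDiffOn ℝ (⊤:ℕ∞) uu O) {p : ℝ × ℝ} (hp : p ∈ O) :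
    HasFDerivAt (fun q => fderiv ℝ uu q (1, q.2 - 1))
      ((fderiv ℝ uu p).comp (((0 : ℝ×ℝ →L[ℝ] ℝ)).prod (ContinuousLinearMap.snd ℝ ℝ ℝ))
        + (fderiv ℝ (fderiv ℝ uu) p).flip (1, p.2 - 1)) p := by
  have hat : ContDiffAt ℝ (⊤:ℕ∞) uu p := (h p hp).contDiffAt (hO.mem_nhds hp)
  have hΦat : ContDiffAt ℝ (⊤:ℕ∞) (fderiv ℝ uu) p := by
    exact hat.fderiv_right (m := (⊤:ℕ∞)) top1
  have hΦ : HasFDerivAt (fderiv ℝ uu) (fderiv ℝ (fderiv ℝ uu) p) p :=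
    (hΦat.differentiableAt (by simp)).hasFDerivAt
  have hA : HasFDerivAt (fun q : ℝ × ℝ => ((1:ℝ), q.2 - 1))
      (((0 : ℝ×ℝ →L[ℝ] ℝ)).prod (ContinuousLinearMap.snd ℝ ℝ ℝ)) p := by
    exact (hasFDerivAt_const (1:ℝ) p).prodMk ((hasFDerivAt_snd).sub_const 1)
  simpa using hΦ.clm_apply hA


lemma bridge {uu : ℝ × ℝ → ℂ} {O : Set (ℝ × ℝ)} (hO : IsOpen O)
    (h : ContDiffOn ℝ (⊤:ℕ∞) uu O) {s y : ℝ} (hp : (s, y) ∈ O) :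
    fderiv ℝ (fun q : ℝ×ℝ => fderiv ℝ uu q (1, q.2 - 1)) (s,y) (1, y + 1)
      + fderiv ℝ uu (s,y) (1, y - 1)
      = waveOp (fun a b => uu (a, b)) s y := by
  have hdiff : ∀ r ∈ O, HasFDerivAt uu (fderiv ℝ uu r) r := fun r hr =>
    (((h r hr).contDiffAt (hO.mem_nhds hr)).differentiableAt (by simp)).hasFDerivAt
  have hat : ContDiffAt ℝ (⊤:ℕ∞) uu (s,y) := (h _ hp).contDiffAt (hO.mem_nhds hp)
  have hΦ : HasFDerivAt (fderiv ℝ uu) (fderiv ℝ (fderiv ℝ uu) (s,y)) (s,y) :=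
    ((hat.fderiv_right (m := (⊤:ℕ∞)) top1).differentiableAt (by simp)).hasFDerivAt
  set Φ : (ℝ×ℝ) → (ℝ×ℝ) →L[ℝ] ℂ := fderiv ℝ uu with hΦdef
  set Φ' : (ℝ×ℝ) →L[ℝ] (ℝ×ℝ) →L[ℝ] ℂ := fderiv ℝ (fderiv ℝ uu) (s,y) with hΦ'def
  have hG : ∀ c : ℝ×ℝ, HasFDerivAt (fun q => Φ q c) (Φ'.flip c) (s,y) := by
    intro c
    simpa using hΦ.clm_apply (hasFDerivAt_const c (s,y))
  -- eventual membership
  have hev1 : ∀ᶠ s' in 𝓝 s, (s', y) ∈ O := by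
    have : Continuous fun s' : ℝ => ((s':ℝ), y) := continuous_id.prodMk continuous_const
    exact this.continuousAt.preimage_mem_nhds (hO.mem_nhds hp)
  have hev2 : ∀ᶠ y' in 𝓝 y, (s, y') ∈ O := by
    have : Continuous fun y' : ℝ => ((s:ℝ), y') := continuous_const.prodMk continuous_id
    exact this.continuousAt.preimage_mem_nhds (hO.mem_nhds hp)
  -- first order terms
  have hdS : dS (fun a b => uu (a,b)) s y = Φ (s,y) (1,0) := (slice1 (hdiff _ hp)).deriv
  have hdY : dY (fun a b => uu (a,b)) s y = Φ (s,y) (0,1) := (slice2 (hdiff _ hp)).deriv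
  -- second order terms
  have hdSdS : dS (dS (fun a b => uu (a,b))) s y = Φ' (1,0) (1,0) := by
    have hev : (fun s' => dS (fun a b => uu (a,b)) s' y)
        =ᶠ[𝓝 s] fun s' => Φ (s', y) (1,0) :=
      hev1.mono (fun s' hs' => (slice1 (hdiff _ hs')).deriv)
    rw [dS, hev.deriv_eq]
    exact (slice1 (hG (1,0))).deriv
  have hdSdY : dS (dY (fun a b => uu (a,b))) s y = Φ' (1,0) (0,1) := by
    have hev : (fun s' => dY (fun a b => uu (a,b)) s' y)
        =ᶠ[𝓝 s] fun s' => Φ (s', y) (0,1) :=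
      hev1.mono (fun s' hs' => (slice2 (hdiff _ hs')).deriv)
    rw [dS, hev.deriv_eq]
    exact (slice1 (hG (0,1))).deriv
  have hdYdY : dY (dY (fun a b => uu (a,b))) s y = Φ' (0,1) (0,1) := by
    have hev : (fun y' => dY (fun a b => uu (a,b)) s y')
        =ᶠ[𝓝 y] fun y' => Φ (s, y') (0,1) :=
      hev2.mono (fun y' hy' => (slice2 (hdiff _ hy')).deriv)
    rw [dY, hev.deriv_eq]
    exact (slice2 (hG (0,1))).deriv
  -- symmetry of second derivatives
  have hsym : Φ' (1,0) (0,1) = Φ' (0,1) (1,0) := (hat.isSymmSndFDerivAt (by rw [minSmoothness_of_isRCLikeNormedField]; exact top3)) (1,0) (0,1)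
  -- the F-term
  have hF : fderiv ℝ (fun q : ℝ×ℝ => Φ q (1, q.2 - 1)) (s,y)
      = (Φ (s,y)).comp (((0 : ℝ×ℝ →L[ℝ] ℝ)).prod (ContinuousLinearMap.snd ℝ ℝ ℝ))
        + Φ'.flip (1, y - 1) := (Fdiff hO h hp).fderiv
  rw [waveOp, hdS, hdY, hdSdS, hdSdY, hdYdY, hF]
  -- expand vectors
  have e1 : ((1:ℝ), y + 1) = (1,0) + (y+1) • ((0:ℝ),(1:ℝ)) := by
    simp [Prod.ext_iff]
  have e2 : ((1:ℝ), y - 1) = (1,0) + (y-1) • ((0:ℝ),(1:ℝ)) := by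
    simp [Prod.ext_iff]
  rw [ContinuousLinearMap.add_apply, ContinuousLinearMap.comp_apply,
    ContinuousLinearMap.flip_apply]
  rw [e1, e2]
  simp only [map_add, _root_.map_smul, ContinuousLinearMap.add_apply,
    ContinuousLinearMap.smul_apply, ContinuousLinearMap.prod_apply,
    ContinuousLinearMap.zero_apply, ContinuousLinearMap.coe_snd',
    ContinuousLinearMap.map_smul]
  have h00 : (Φ (s,y)) ((0:ℝ),(0:ℝ)) = 0 := by
    have : ((0:ℝ),(0:ℝ)) = (0 : ℝ×ℝ) := rfl
    rw [this]; exact (Φ (s,y)).map_zero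
  rw [hsym, h00]
  simp only [Complex.real_smul]
  push_cast
  ring


lemma diffU {W : ℝ × ℝ → ℂ} {O : Set (ℝ × ℝ)} (hO : IsOpen O)
    (h : ContDiffOn ℝ (⊤:ℕ∞) W O) {q : ℝ × ℝ} (hq : q ∈ O) :
    HasFDerivAt W (fderiv ℝ W q) q :=
  (((h q hq).contDiffAt (hO.mem_nhds hq)).differentiableAt (by simp)).hasFDerivAt

end Stmt3Aux

open Stmt3Aux

/-- Uniqueness (Lemma `lem:dAlembert`, uniqueness part): two smooth solutions of the
hyperboloidal free wave equation on `[0,∞)×(-1,1)` with the same initial data `(f,g)`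
coincide. -/
theorem stmt3 (f g : ℝ → ℂ)
    (hf : ContDiffOn ℝ (⊤:ℕ∞) f (Ioo (-1:ℝ) 1))
    (hg : ContDiffOn ℝ (⊤:ℕ∞) g (Ioo (-1:ℝ) 1))
    (u v : ℝ → ℝ → ℂ)
    (hu : ContDiffOn ℝ (⊤:ℕ∞) (fun p : ℝ × ℝ => u p.1 p.2) (Ici (0:ℝ) ×ˢ Ioo (-1:ℝ) 1))
    (hv : ContDiffOn ℝ (⊤:ℕ∞) (fun p : ℝ × ℝ => v p.1 p.2) (Ici (0:ℝ) ×ˢ Ioo (-1:ℝ) 1))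
    (hueq : ∀ s ∈ Ioi (0:ℝ), ∀ y ∈ Ioo (-1:ℝ) 1, waveOp u s y = 0)
    (hveq : ∀ s ∈ Ioi (0:ℝ), ∀ y ∈ Ioo (-1:ℝ) 1, waveOp v s y = 0)
    (hu0 : ∀ y ∈ Ioo (-1:ℝ) 1, u 0 y = f y)
    (hv0 : ∀ y ∈ Ioo (-1:ℝ) 1, v 0 y = f y)
    (hu1 : ∀ y ∈ Ioo (-1:ℝ) 1, derivWithin (fun s => u s y) (Ici (0:ℝ)) 0 = g y)
    (hv1 : ∀ y ∈ Ioo (-1:ℝ) 1, derivWithin (fun s => v s y) (Ici (0:ℝ)) 0 = g y) :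
    ∀ s ∈ Ici (0:ℝ), ∀ y ∈ Ioo (-1:ℝ) 1, u s y = v s y := by
  intro s hs y hy
  set T : Set (ℝ×ℝ) := Ici (0:ℝ) ×ˢ Ioo (-1:ℝ) 1 with hTdef
  set U : Set (ℝ×ℝ) := Ioi (0:ℝ) ×ˢ Ioo (-1:ℝ) 1 with hUdef
  have hUopen : IsOpen U := isOpen_Ioi.prod isOpen_Ioo
  have hUT : U ⊆ T := prod_mono_left Ioi_subset_Ici_self
  have hTnhds : ∀ q ∈ U, T ∈ 𝓝 q := fun q hq => mem_of_superset (hUopen.mem_nhds hq) hUT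
  have hTu : UniqueDiffOn ℝ T := by
    apply uniqueDiffOn_convex ((convex_Ici (0:ℝ)).prod (convex_Ioo (-1:ℝ) 1))
    refine ⟨((1:ℝ), (0:ℝ)), ?_⟩
    rw [interior_prod_eq, interior_Ici, interior_Ioo]
    exact ⟨by norm_num, by norm_num, by norm_num⟩
  set W : ℝ×ℝ → ℂ := fun p => u p.1 p.2 - v p.1 p.2 with hWdef
  have hWsm : ContDiffOn ℝ (⊤:ℕ∞) W T := hu.sub hv
  have hW0 : ∀ y0 ∈ Ioo (-1:ℝ) 1, W (0, y0) = 0 := by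
    intro y0 h0
    simp only [hWdef]
    rw [hu0 y0 h0, hv0 y0 h0, sub_self]
  -- Step A: the key combination vanishes on U
  have hFW : ∀ q ∈ U, fderiv ℝ (fun r : ℝ×ℝ => fderiv ℝ W r (1, r.2 - 1)) q (1, q.2 + 1)
      + fderiv ℝ W q (1, q.2 - 1) = 0 := by
    rintro ⟨a, b⟩ hq
    have haU : a ∈ Ioi (0:ℝ) := hq.1
    have hbU : b ∈ Ioo (-1:ℝ) 1 := hq.2
    have huU : ContDiffOn ℝ (⊤:ℕ∞) (fun p : ℝ×ℝ => u p.1 p.2) U := hu.mono hUT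
    have hvU : ContDiffOn ℝ (⊤:ℕ∞) (fun p : ℝ×ℝ => v p.1 p.2) U := hv.mono hUT
    have hsub : ∀ r ∈ U, fderiv ℝ W r =
        fderiv ℝ (fun p : ℝ×ℝ => u p.1 p.2) r - fderiv ℝ (fun p : ℝ×ℝ => v p.1 p.2) r := by
      intro r hr
      exact fderiv_sub (diffU hUopen huU hr).differentiableAt
        (diffU hUopen hvU hr).differentiableAt
    have hev : (fun r : ℝ×ℝ => fderiv ℝ W r (1, r.2 - 1)) =ᶠ[𝓝 (a,b)]
        (fun r : ℝ×ℝ => fderiv ℝ (fun p : ℝ×ℝ => u p.1 p.2) r (1, r.2 - 1)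
          - fderiv ℝ (fun p : ℝ×ℝ => v p.1 p.2) r (1, r.2 - 1)) := by
      filter_upwards [hUopen.mem_nhds hq] with r hr
      rw [hsub r hr]; rfl
    rw [hev.fderiv_eq]
    have hdu := (Fdiff hUopen huU hq).differentiableAt
    have hdv := (Fdiff hUopen hvU hq).differentiableAt
    rw [fderiv_fun_sub hdu hdv]
    have hbu := bridge hUopen huU hq
    have hbv := bridge hUopen hvU hq
    have hwu : waveOp (fun a b => u a b) a b = 0 := hueq a haU b hbU
    have hwv : waveOp (fun a b => v a b) a b = 0 := hveq a haU b hbU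
    rw [hsub _ hq]
    simp only [ContinuousLinearMap.sub_apply]
    rw [hwu] at hbu
    rw [hwv] at hbv
    have : (fderiv ℝ (fun r : ℝ×ℝ =>
        fderiv ℝ (fun p : ℝ×ℝ => u p.1 p.2) r (1, r.2 - 1)) (a,b)) (1, b + 1)
        + (fderiv ℝ (fun p : ℝ×ℝ => u p.1 p.2) (a,b)) (1, b - 1) = 0 := hbu
    have hv' : (fderiv ℝ (fun r : ℝ×ℝ =>
        fderiv ℝ (fun p : ℝ×ℝ => v p.1 p.2) r (1, r.2 - 1)) (a,b)) (1, b + 1)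
        + (fderiv ℝ (fun p : ℝ×ℝ => v p.1 p.2) (a,b)) (1, b - 1) = 0 := hbv
    linear_combination this - hv'
  -- Step B: boundary values of the within-derivative combination
  set F : ℝ×ℝ → ℂ := fun q => fderivWithin ℝ W T q (1, q.2 - 1) with hFdef
  have hFcont : ContinuousOn F T := by
    apply ContinuousOn.clm_apply (hWsm.continuousOn_fderivWithin hTu top2)
    exact (continuous_const.prodMk (continuous_snd.sub continuous_const)).continuousOn
  have hFU : ∀ q ∈ U, F q = fderiv ℝ W q (1, q.2 - 1) := by
    intro q hq
    simp only [hFdef]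
    rw [fderivWithin_of_mem_nhds (hTnhds q hq)]
  have hFbd : ∀ y0 ∈ Ioo (-1:ℝ) 1, F (0, y0) = 0 := by
    intro y0 h0
    have hp0 : ((0:ℝ), y0) ∈ T := ⟨self_mem_Ici, h0⟩
    set L := fderivWithin ℝ W T (0, y0) with hLdef
    have hWd : HasFDerivWithinAt W L T (0,y0) :=
      ((hWsm _ hp0).differentiableWithinAt (by simp)).hasFDerivWithinAt
    have hι : HasDerivWithinAt (fun s' : ℝ => ((s':ℝ), y0)) ((1:ℝ),(0:ℝ)) (Ici 0) 0 :=
      ((hasDerivAt_id (0:ℝ)).prodMk (hasDerivAt_const _ y0)).hasDerivWithinAt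
    have hmaps : MapsTo (fun s' : ℝ => ((s':ℝ), y0)) (Ici 0) T := fun s' hs' => ⟨hs', h0⟩
    have hs1 : HasDerivWithinAt (fun s' => W (s', y0)) (L (1,0)) (Ici 0) 0 := by
      simpa [Function.comp_def] using hWd.comp_hasDerivWithinAt (0:ℝ) hι hmaps
    have hsu : HasDerivWithinAt (fun s' => u s' y0)
        ((fderivWithin ℝ (fun p : ℝ×ℝ => u p.1 p.2) T (0,y0)) (1,0)) (Ici 0) 0 := by
      simpa [Function.comp_def] using
        (((hu _ hp0).differentiableWithinAt (by simp)).hasFDerivWithinAt).comp_hasDerivWithinAt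
          (0:ℝ) hι hmaps
    have hsv : HasDerivWithinAt (fun s' => v s' y0)
        ((fderivWithin ℝ (fun p : ℝ×ℝ => v p.1 p.2) T (0,y0)) (1,0)) (Ici 0) 0 := by
      simpa [Function.comp_def] using
        (((hv _ hp0).differentiableWithinAt (by simp)).hasFDerivWithinAt).comp_hasDerivWithinAt
          (0:ℝ) hι hmaps
    have hL10 : L (1,0) = 0 := by
      have h1 : derivWithin (fun s' => W (s', y0)) (Ici 0) 0 = L (1,0) :=
        hs1.derivWithin (uniqueDiffOn_Ici 0 0 self_mem_Ici)
      have h2 : derivWithin (fun s' => W (s', y0)) (Ici 0) 0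
          = derivWithin (fun s' => u s' y0) (Ici 0) 0
            - derivWithin (fun s' => v s' y0) (Ici 0) 0 := by
        exact derivWithin_sub
          hsu.differentiableWithinAt hsv.differentiableWithinAt
      rw [← h1, h2, hu1 y0 h0, hv1 y0 h0, sub_self]
    have hκ : HasDerivWithinAt (fun y' : ℝ => ((0:ℝ), y')) ((0:ℝ),(1:ℝ)) (Ioo (-1:ℝ) 1) y0 :=
      ((hasDerivAt_const y0 (0:ℝ)).prodMk (hasDerivAt_id y0)).hasDerivWithinAt
    have hmaps2 : MapsTo (fun y' : ℝ => ((0:ℝ), y')) (Ioo (-1:ℝ) 1) T :=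
      fun y' hy' => ⟨self_mem_Ici, hy'⟩
    have hs2 : HasDerivWithinAt (fun y' => W (0, y')) (L (0,1)) (Ioo (-1:ℝ) 1) y0 := by
      simpa [Function.comp_def] using hWd.comp_hasDerivWithinAt y0 hκ hmaps2
    have hL01 : L (0,1) = 0 := by
      have h1 : derivWithin (fun y' => W (0, y')) (Ioo (-1:ℝ) 1) y0 = L (0,1) :=
        hs2.derivWithin (isOpen_Ioo.uniqueDiffOn y0 h0)
      have h2 : derivWithin (fun y' => W (0, y')) (Ioo (-1:ℝ) 1) y0 = 0 := by
        rw [derivWithin_congr (fun x hx => hW0 x hx) (hW0 y0 h0)]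
        exact congrFun (derivWithin_const _ (0:ℂ)) y0
      rw [← h1, h2]
    have e2 : ((1:ℝ), y0 - 1) = (1,0) + (y0-1) • ((0:ℝ),(1:ℝ)) := by simp [Prod.ext_iff]
    show L (1, y0 - 1) = 0
    rw [e2, map_add, L.map_smul, hL10, hL01, smul_zero, add_zero]
  -- Step C: F vanishes on U
  have hF0 : ∀ q ∈ U, fderiv ℝ W q (1, q.2 - 1) = 0 := by
    rintro ⟨a, b⟩ hq
    have ha : (0:ℝ) < a := hq.1
    have hb : b ∈ Ioo (-1:ℝ) 1 := hq.2
    set β : ℝ → ℝ := fun t => (b+1) * Real.exp (t - a) - 1 with hβdef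
    have hβcont : Continuous β := by
      exact (continuous_const.mul
        (Real.continuous_exp.comp (continuous_id.sub continuous_const))).sub continuous_const
    have hβd : ∀ t, HasDerivAt β (β t + 1) t := by
      intro t
      have h1 : HasDerivAt (fun t' : ℝ => Real.exp (t' - a)) (Real.exp (t - a)) t := by
        simpa using ((hasDerivAt_id t).sub_const a).exp
      have h2 := (h1.const_mul (b+1)).sub_const 1
      refine HasDerivAt.congr_deriv h2 ?_
      simp only [hβdef]; ring
    have hβmem : ∀ t ∈ Icc 0 a, β t ∈ Ioo (-1:ℝ) 1 := by
      intro t ht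
      have hexp : Real.exp (t - a) ≤ 1 := by
        rw [Real.exp_le_one_iff]; linarith [ht.2]
      have hpos : (0:ℝ) < Real.exp (t - a) := Real.exp_pos _
      have hb1 : (0:ℝ) < b + 1 := by linarith [hb.1]
      have hb2 : b + 1 < 2 := by linarith [hb.2]
      constructor
      · simp only [hβdef]; nlinarith
      · simp only [hβdef]; nlinarith
    have hβa : β a = b := by simp [hβdef]
    have hcurve : ∀ t, HasDerivAt (fun t' => ((t':ℝ), β t')) ((1:ℝ), β t + 1) t :=
      fun t => (hasDerivAt_id t).prodMk (hβd t)
    have hcurvec : Continuous fun t' => ((t':ℝ), β t') := continuous_id.prodMk hβcont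
    have hcmem : ∀ t ∈ Icc 0 a, ((t:ℝ), β t) ∈ T := fun t ht => ⟨ht.1, hβmem t ht⟩
    have hcmemU : ∀ t ∈ Ioo 0 a, ((t:ℝ), β t) ∈ U :=
      fun t ht => ⟨ht.1, hβmem t (Ioo_subset_Icc_self ht)⟩
    set ψ : ℝ → ℂ := fun t => F (t, β t) with hψdef
    have hψcont : ContinuousOn ψ (Icc 0 a) :=
      hFcont.comp hcurvec.continuousOn hcmem
    have hψd : ∀ t ∈ Ioo 0 a, HasDerivAt ψ (-ψ t) t := by
      intro t ht
      have hqU : ((t:ℝ), β t) ∈ U := hcmemU t ht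
      have hF2 := Fdiff hUopen (hWsm.mono hUT) hqU
      have hcomp : HasDerivAt (fun t' => fderiv ℝ W (t', β t') (1, β t' - 1))
          ((fderiv ℝ (fun r : ℝ×ℝ => fderiv ℝ W r (1, r.2 - 1)) (t, β t)) (1, β t + 1)) t := by
        have h := hF2.comp_hasDerivAt t (hcurve t)
        rw [hF2.fderiv]
        simpa [Function.comp_def] using h
      have hval : (fderiv ℝ (fun r : ℝ×ℝ => fderiv ℝ W r (1, r.2 - 1)) (t, β t)) (1, β t + 1)
          = -ψ t := by
        have h0 := hFW _ hqU
        have h1 : ψ t = fderiv ℝ W (t, β t) (1, β t - 1) := hFU _ hqU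
        rw [h1]
        linear_combination h0
      rw [hval] at hcomp
      have hevU : ∀ᶠ t' in 𝓝 t, ((t':ℝ), β t') ∈ U :=
        hcurvec.continuousAt.preimage_mem_nhds (hUopen.mem_nhds hqU)
      apply hcomp.congr_of_eventuallyEq
      filter_upwards [hevU] with t' ht'
      exact hFU _ ht'
    set χ : ℝ → ℂ := fun t => Real.exp t • ψ t with hχdef
    have hχcont : ContinuousOn χ (Icc 0 a) :=
      Real.continuous_exp.continuousOn.smul hψcont
    have hχd : ∀ t ∈ Ioo 0 a, HasDerivAt χ 0 t := by
      intro t ht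
      have h := (Real.hasDerivAt_exp t).smul (hψd t ht)
      have e : Real.exp t • -ψ t + Real.exp t • ψ t = 0 := by simp [smul_neg]
      rw [e] at h; exact h
    have hχ := const_of_deriv_zero ha hχcont hχd
    have hψ0 : ψ 0 = 0 := hFbd (β 0) (hβmem 0 ⟨le_rfl, ha.le⟩)
    have hχ0 : χ 0 = 0 := by simp only [hχdef]; rw [hψ0, smul_zero]
    have hψa : ψ a = 0 := by
      have h : Real.exp a • ψ a = 0 := by
        have : χ a = 0 := by rw [hχ, hχ0]
        simpa [hχdef] using this
      rcases smul_eq_zero.1 h with h' | h'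
      · exact absurd h' (Real.exp_ne_zero a)
      · exact h'
    calc fderiv ℝ W (a,b) (1, (a,b).2 - 1) = F (a,b) := (hFU _ hq).symm
      _ = ψ a := by simp only [hψdef, hβa]
      _ = 0 := hψa
  -- Step D: transport of W itself
  rcases eq_or_lt_of_le (show (0:ℝ) ≤ s from hs) with h0 | hpos
  · have hW := hW0 y hy
    rw [← h0]
    have : u 0 y - v 0 y = 0 := by simpa [hWdef] using hW
    exact sub_eq_zero.1 this
  · set γ : ℝ → ℝ := fun t => (y-1) * Real.exp (t - s) + 1 with hγdef
    have hγcont : Continuous γ := (continuous_const.mul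
        (Real.continuous_exp.comp (continuous_id.sub continuous_const))).add continuous_const
    have hγd : ∀ t, HasDerivAt γ (γ t - 1) t := by
      intro t
      have h1 : HasDerivAt (fun t' : ℝ => Real.exp (t' - s)) (Real.exp (t - s)) t := by
        simpa using ((hasDerivAt_id t).sub_const s).exp
      have h2 := (h1.const_mul (y-1)).add_const 1
      refine HasDerivAt.congr_deriv h2 ?_
      simp only [hγdef]; ring
    have hγmem : ∀ t ∈ Icc 0 s, γ t ∈ Ioo (-1:ℝ) 1 := by
      intro t ht
      have hexp : Real.exp (t - s) ≤ 1 := by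
        rw [Real.exp_le_one_iff]; linarith [ht.2]
      have hpos' : (0:ℝ) < Real.exp (t - s) := Real.exp_pos _
      have h1 : y - 1 < 0 := by linarith [hy.2]
      have h2 : -2 < y - 1 := by linarith [hy.1]
      constructor
      · simp only [hγdef]; nlinarith
      · simp only [hγdef]; nlinarith
    have hγs : γ s = y := by simp [hγdef]
    have hφcont : ContinuousOn (fun t => W (t, γ t)) (Icc 0 s) :=
      hWsm.continuousOn.comp (continuous_id.prodMk hγcont).continuousOn
        (fun t ht => ⟨ht.1, hγmem t ht⟩)
    have hφd : ∀ t ∈ Ioo 0 s, HasDerivAt (fun t' => W (t', γ t')) 0 t := by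
      intro t ht
      have hqU : ((t:ℝ), γ t) ∈ U := ⟨ht.1, hγmem t (Ioo_subset_Icc_self ht)⟩
      have h := (diffU hUopen (hWsm.mono hUT) hqU).comp_hasDerivAt t
        ((hasDerivAt_id t).prodMk (hγd t))
      have h2 : fderiv ℝ W (t, γ t) ((1:ℝ), γ t - 1) = 0 := hF0 _ hqU
      rw [h2] at h
      simpa [Function.comp_def] using h
    have hconst := const_of_deriv_zero hpos hφcont hφd
    have hγ0 : γ 0 ∈ Ioo (-1:ℝ) 1 := hγmem 0 ⟨le_rfl, hpos.le⟩
    have hWs : W (s, y) = 0 := by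
      have : W (s, γ s) = W (0, γ 0) := hconst
      rw [hγs] at this
      rw [this]
      exact hW0 (γ 0) hγ0
    have : u s y - v s y = 0 := by simpa [hWdef] using hWs
    exact sub_eq_zero.1 this
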